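/- Let q be a monic complex polynomial of even degree d ≥ 2 and let n ≥ 1. Then there exist complex polynomials f₀, …, fₙ of degree at most n, forming a basis of the space of polynomials of degree at most n, and nonnegative real numbers λ₀, …, λₙ, such that ⟨fᵢ, fⱼ⟩_n = δ_{ij} (orthonormality in the Fischer inner product) and [fᵢ∘q, fⱼ∘q]_{nd} = λᵢ·δ_{ij} for all i, j ∈ {0,…,n}. -/

import Mathlib

open Polynomial

/-- The apolarity form `[f,g]_m`. -/
noncomputable def apol (m : ℕ) (f g : Polynomial ℂ) : ℂ :=
  ∑ k ∈ Finset.range (m + 1),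
    (-1 : ℂ) ^ k * ((m.choose k : ℂ))⁻¹ * f.coeff k * g.coeff (m - k)

/-- The symmetrization `Sym_N(f)` of a polynomial, as a function on `ι → ℂ`
with `N = card ι`. -/
noncomputable def symFun {ι : Type*} [Fintype ι] (f : Polynomial ℂ) (y : ι → ℂ) : ℂ :=
  ∑ k ∈ Finset.range (Fintype.card ι + 1),
    (((Fintype.card ι).choose k : ℂ))⁻¹ * f.coeff k *
      MvPolynomial.eval y (MvPolynomial.esymm ι ℂ k)

/-- A circular domain: an open or closed disk or half-plane, or a complement thereof. -/
def IsCircularDomain (D : Set ℂ) : Prop :=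
  ∃ (α γ : ℝ) (β : ℂ),
    D = {z : ℂ | α * Complex.normSq z + ((starRingEnd ℂ) β * z).re + γ < 0} ∨
    D = {z : ℂ | α * Complex.normSq z + ((starRingEnd ℂ) β * z).re + γ ≤ 0}

/-- `q_∘(D) = {u : q⁻¹(u) ⊆ D}`. -/
def innerImage (q : Polynomial ℂ) (D : Set ℂ) : Set ℂ :=
  {u : ℂ | ∀ z : ℂ, q.eval z = u → z ∈ D}

/-- `S_{q,n}(f)(u₁,…,uₙ) = [f∘q, ∏ⱼ (q - uⱼ)]_{nd}`. -/
noncomputable def Sfun (q : Polynomial ℂ) (n : ℕ) (f : Polynomial ℂ) (u : Fin n → ℂ) : ℂ :=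
  apol (n * q.natDegree) (f.comp q) (∏ j, (q - Polynomial.C (u j)))

/-- The Fischer inner product `⟨f,g⟩_n`. -/
noncomputable def fischer (n : ℕ) (f g : Polynomial ℂ) : ℂ :=
  ∑ k ∈ Finset.range (n + 1),
    ((n.choose k : ℂ))⁻¹ * f.coeff k * (starRingEnd ℂ) (g.coeff k)

open scoped InnerProductSpace ComplexConjugate

universe u

lemma apol_symm {m : ℕ} (hm : Even m) (f g : Polynomial ℂ) : apol m f g = apol m g f := by
  unfold apol
  rw [← Finset.sum_range_reflect]
  refine Finset.sum_congr rfl fun k hk => ?_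
  have hk' : k ≤ m := Nat.lt_succ_iff.mp (Finset.mem_range.mp hk)
  have h1 : m + 1 - 1 - k = m - k := by omega
  rw [h1, Nat.sub_sub_self hk', Nat.choose_symm hk']
  have h2 : (-1 : ℂ) ^ (m - k) = (-1) ^ k := by
    rcases Nat.even_or_odd k with hk2 | hk2
    · rw [hk2.neg_one_pow, ((Nat.even_sub hk').mpr (iff_of_true hm hk2)).neg_one_pow]
    · have hodd : ¬ Even (m - k) := by
        rw [Nat.even_sub hk']
        simp [hm, Nat.not_even_iff_odd.mpr hk2]
      rw [(Nat.not_even_iff_odd.mp hodd).neg_one_pow, hk2.neg_one_pow]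
  rw [h2]; ring

lemma apol_sum_left {ι : Type*} (s : Finset ι) (m : ℕ) (F : ι → Polynomial ℂ)
    (g : Polynomial ℂ) : apol m (∑ i ∈ s, F i) g = ∑ i ∈ s, apol m (F i) g := by
  unfold apol
  simp only [Polynomial.finset_sum_coeff, Finset.mul_sum, Finset.sum_mul]
  exact Finset.sum_comm

lemma apol_sum_right {ι : Type*} (s : Finset ι) (m : ℕ) (F : ι → Polynomial ℂ)
    (g : Polynomial ℂ) : apol m g (∑ i ∈ s, F i) = ∑ i ∈ s, apol m g (F i) := by
  unfold apol
  simp only [Polynomial.finset_sum_coeff, Finset.mul_sum, Finset.sum_mul]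
  exact Finset.sum_comm

lemma apol_smul_left (m : ℕ) (c : ℂ) (f g : Polynomial ℂ) :
    apol m (c • f) g = c * apol m f g := by
  unfold apol
  rw [Finset.mul_sum]
  refine Finset.sum_congr rfl fun k _ => ?_
  rw [Polynomial.coeff_smul, smul_eq_mul]; ring

lemma apol_smul_right (m : ℕ) (c : ℂ) (f g : Polynomial ℂ) :
    apol m g (c • f) = c * apol m g f := by
  unfold apol
  rw [Finset.mul_sum]
  refine Finset.sum_congr rfl fun k _ => ?_
  rw [Polynomial.coeff_smul, smul_eq_mul]; ring

lemma fischer_sum_left {ι : Type*} (s : Finset ι) (n : ℕ) (F : ι → Polynomial ℂ)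
    (g : Polynomial ℂ) : fischer n (∑ i ∈ s, F i) g = ∑ i ∈ s, fischer n (F i) g := by
  unfold fischer
  simp only [Polynomial.finset_sum_coeff, Finset.mul_sum, Finset.sum_mul]
  exact Finset.sum_comm

lemma fischer_sum_right {ι : Type*} (s : Finset ι) (n : ℕ) (F : ι → Polynomial ℂ)
    (g : Polynomial ℂ) : fischer n g (∑ i ∈ s, F i) = ∑ i ∈ s, fischer n g (F i) := by
  unfold fischer
  simp only [Polynomial.finset_sum_coeff, map_sum, Finset.mul_sum, Finset.sum_mul]
  exact Finset.sum_comm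

lemma fischer_smul_left (n : ℕ) (c : ℂ) (f g : Polynomial ℂ) :
    fischer n (c • f) g = c * fischer n f g := by
  unfold fischer
  rw [Finset.mul_sum]
  refine Finset.sum_congr rfl fun k _ => ?_
  rw [Polynomial.coeff_smul, smul_eq_mul]; ring

lemma fischer_smul_right (n : ℕ) (c : ℂ) (f g : Polynomial ℂ) :
    fischer n g (c • f) = conj c * fischer n g f := by
  unfold fischer
  rw [Finset.mul_sum]
  refine Finset.sum_congr rfl fun k _ => ?_
  rw [Polynomial.coeff_smul, smul_eq_mul, map_mul]; ring
lemma takagi : ∀ (m : ℕ) (E : Type u) [NormedAddCommGroup E],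
    ∀ [InnerProductSpace ℂ E] [FiniteDimensional ℂ E],
    Module.finrank ℂ E = m → ∀ (S : E →ₗ[ℝ] E),
    (∀ (c : ℂ) (x : E), S (c • x) = conj c • S x) →
    (∀ x y : E, ⟪S x, y⟫_ℂ = ⟪S y, x⟫_ℂ) →
    ∃ (v : Fin m → E) (lam : Fin m → ℝ),
      Orthonormal ℂ v ∧ ∀ i, 0 ≤ lam i ∧ S (v i) = (lam i : ℂ) • v i := by
  intro m
  induction m with
  | zero =>
    intro E _ _ _ _ S _ _
    exact ⟨finZeroElim, finZeroElim, ⟨fun i => i.elim0, fun i => i.elim0⟩, fun i => i.elim0⟩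
  | succ m ih =>
    intro E _ _ _ hE S hka hsym
    have : Nontrivial E := Module.nontrivial_of_finrank_pos (R := ℂ) (by omega)
    -- the complex-linear operator T = S ∘ S
    set T : Module.End ℂ E :=
      { toFun := fun x => S (S x)
        map_add' := by intro x y; simp
        map_smul' := by
          intro c x
          simp only [RingHom.id_apply]
          rw [hka, hka, Complex.conj_conj] } with hT
    obtain ⟨μ, hμ⟩ := Module.End.exists_eigenvalue T
    obtain ⟨u, hu⟩ := hμ.exists_hasEigenvector
    have hTu : S (S u) = μ • u := hu.apply_eq_smul
    have hu0 : u ≠ 0 := hu.right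
    -- μ‖u‖² = ‖Su‖²
    have key : μ * ((‖u‖ : ℂ) ^ 2) = (‖S u‖ : ℂ) ^ 2 := by
      have h1 : ⟪u, S (S u)⟫_ℂ = μ * ((‖u‖ : ℂ) ^ 2) := by
        rw [hTu, inner_smul_right, inner_self_eq_norm_sq_to_K]
        norm_cast
      have h2 : ⟪u, S (S u)⟫_ℂ = (‖S u‖ : ℂ) ^ 2 := by
        rw [← inner_conj_symm, hsym, inner_self_eq_norm_sq_to_K]
        simp [← Complex.ofReal_pow]
      exact h1.symm.trans h2
    set r : ℝ := ‖S u‖ / ‖u‖ with hr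
    have hr0 : 0 ≤ r := div_nonneg (norm_nonneg _) (norm_nonneg _)
    have hun : (‖u‖ : ℂ) ≠ 0 := by
      simpa using hu0
    have hμr : μ = (r : ℂ) ^ 2 := by
      have : (r : ℂ) = (‖S u‖ : ℂ) / (‖u‖ : ℂ) := by push_cast [hr]; ring
      rw [this, div_pow, ← key]
      field_simp
    -- find g ≠ 0 with S g = r • g
    have hstep : ∃ g : E, g ≠ 0 ∧ S g = (r : ℂ) • g := by
      by_cases hw : S u + (r : ℂ) • u = 0
      · refine ⟨Complex.I • u, ?_, ?_⟩
        · simp [smul_eq_zero, Complex.I_ne_zero, hu0]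
        · have hSu : S u = -((r : ℂ) • u) := by linear_combination (norm := module) hw
          rw [hka, hSu, Complex.conj_I, neg_smul_neg, smul_smul, smul_smul, mul_comm]
      · refine ⟨S u + (r : ℂ) • u, hw, ?_⟩
        rw [map_add, hka]
        rw [Complex.conj_ofReal, hTu, hμr, smul_add, smul_smul, ← pow_two]
        abel
    obtain ⟨g, hg0, hSg⟩ := hstep
    -- normalize
    set f : E := ((‖g‖⁻¹ : ℝ) : ℂ) • g with hf
    have hgn : (‖g‖ : ℝ) ≠ 0 := norm_ne_zero_iff.mpr hg0
    have hfnorm : ‖f‖ = 1 := by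
      rw [hf, norm_smul]
      simp [norm_inv, hgn]
    have hf0 : f ≠ 0 := by
      intro h; rw [h, norm_zero] at hfnorm; norm_num at hfnorm
    have hSf : S f = (r : ℂ) • f := by
      rw [hf, hka, Complex.conj_ofReal, hSg, smul_smul, smul_smul]
      ring_nf
    -- the orthogonal complement
    set K : Submodule ℂ E := (ℂ ∙ f)ᗮ with hK
    have hfK : ∀ x ∈ K, ⟪f, x⟫_ℂ = 0 := fun x hx =>
      (Submodule.mem_orthogonal _ _).mp hx f (Submodule.mem_span_singleton_self f)
    have hinv : ∀ x ∈ K, S x ∈ K := by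
      intro x hx
      rw [Submodule.mem_orthogonal]
      intro y hy
      obtain ⟨c, rfl⟩ := Submodule.mem_span_singleton.mp hy
      rw [inner_smul_left]
      have : ⟪f, S x⟫_ℂ = 0 := by
        rw [← inner_conj_symm, hsym, hSf, inner_smul_left, Complex.conj_ofReal,
          hfK x hx]
        simp
      rw [this, mul_zero]
    -- restricted operator
    set S' : K →ₗ[ℝ] K :=
      { toFun := fun x => ⟨S x, hinv x x.2⟩
        map_add' := by intro x y; ext; simp
        map_smul' := by
          intro c x
          ext
          simp } with hS'
    have hKrank : Module.finrank ℂ K = m := by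
      have h1 := Submodule.finrank_add_finrank_orthogonal (K := (ℂ ∙ f)) (𝕜 := ℂ)
      rw [finrank_span_singleton hf0, hE] at h1
      rw [hK]
      omega
    obtain ⟨w, lam', hw_on, hw_eig⟩ := ih K hKrank S'
      (by
        intro c x
        ext
        simp [hS', hka])
      (by
        intro x y
        simpa [hS', Submodule.coe_inner] using hsym (x : E) (y : E))
    refine ⟨Fin.cons f (fun i => (w i : E)), Fin.cons r lam', ?_, ?_⟩
    · rw [orthonormal_iff_ite]
      intro i j
      refine Fin.cases ?_ ?_ i
      · refine Fin.cases ?_ ?_ j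
        · simp [inner_self_eq_norm_sq_to_K, hfnorm]
        · intro j
          simp only [Fin.cons_zero, Fin.cons_succ]
          rw [hfK _ (w j).2]
          simp [Fin.succ_ne_zero j, (Fin.succ_ne_zero j).symm]
      · intro i
        refine Fin.cases ?_ ?_ j
        · simp only [Fin.cons_zero, Fin.cons_succ]
          rw [← inner_conj_symm, hfK _ (w i).2]
          simp [Fin.succ_ne_zero i]
        · intro j
          simp only [Fin.cons_succ]
          have := (orthonormal_iff_ite.mp hw_on) i j
          rw [Submodule.coe_inner] at this
          simpa [Fin.succ_inj] using this
    · intro i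
      refine Fin.cases ?_ ?_ i
      · simpa using ⟨hr0, hSf⟩
      · intro i
        simp only [Fin.cons_succ]
        refine ⟨(hw_eig i).1, ?_⟩
        have h2 := congrArg (Subtype.val) (hw_eig i).2
        simpa [hS'] using h2

/-- for q monic of even degree, there is a basis of ℂ[z]_n that is
orthonormal for the Fischer inner product and pairwise q-apolar. -/
theorem stmt_17 (d : ℕ) (hd : 2 ≤ d) (hde : Even d) (q : Polynomial ℂ) (hq : q.Monic)
    (hqd : q.natDegree = d) (n : ℕ) (hn : 1 ≤ n) :
    ∃ (f : Fin (n + 1) → Polynomial ℂ) (lam : Fin (n + 1) → ℝ),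
      (∀ i, (f i).degree ≤ (n : ℕ)) ∧
      LinearIndependent ℂ f ∧
      Submodule.span ℂ (Set.range f) = Polynomial.degreeLE ℂ (n : ℕ) ∧
      (∀ i, 0 ≤ lam i) ∧
      (∀ i j, fischer n (f i) (f j) = if i = j then 1 else 0) ∧
      (∀ i j, apol (n * d) ((f i).comp q) ((f j).comp q)
        = if i = j then (lam i : ℂ) else 0) := by
  classical
  have hnd : Even (n * d) := hde.mul_left n
  set p : Fin (n + 1) → Polynomial ℂ :=
    fun k => Polynomial.C ((Real.sqrt (n.choose k) : ℂ)) * X ^ (k : ℕ) with hp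
  set A : Fin (n + 1) → Fin (n + 1) → ℂ :=
    fun i j => apol (n * d) ((p i).comp q) ((p j).comp q) with hA
  have hAsymm : ∀ i j, A i j = A j i := fun i j => apol_symm hnd _ _
  set E := EuclideanSpace ℂ (Fin (n + 1)) with hEdef
  set S : E →ₗ[ℝ] E :=
    { toFun := fun c => (WithLp.toLp 2 (fun i => ∑ j, A i j * conj (c j)) : EuclideanSpace ℂ (Fin (n + 1)))
      map_add' := by
        intro x y
        ext i
        show (∑ j, A i j * conj (x j + y j))
          = (∑ j, A i j * conj (x j)) + ∑ j, A i j * conj (y j)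
        rw [← Finset.sum_add_distrib]
        exact Finset.sum_congr rfl fun j _ => by rw [map_add]; ring
      map_smul' := by
        intro r x
        ext i
        show (∑ j, A i j * conj (r • x j)) = r • ∑ j, A i j * conj (x j)
        rw [Finset.smul_sum]
        refine Finset.sum_congr rfl fun j _ => ?_
        rw [Complex.real_smul, Complex.real_smul, map_mul, Complex.conj_ofReal]
        ring } with hS
  have hSapp : ∀ (c : E) (i : Fin (n + 1)), S c i = ∑ j, A i j * conj (c j) :=
    fun c i => rfl
  have expand : ∀ x y : E, ⟪S x, y⟫_ℂ = ∑ i, ∑ j, conj (A i j) * x j * y i := by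
    intro x y
    rw [PiLp.inner_apply]
    refine Finset.sum_congr rfl fun i _ => ?_
    rw [RCLike.inner_apply', hSapp, map_sum, Finset.sum_mul]
    refine Finset.sum_congr rfl fun j _ => ?_
    rw [map_mul, Complex.conj_conj]
  obtain ⟨v, lam, hv_on, hv_eig⟩ := takagi (n + 1) E finrank_euclideanSpace_fin S
    (by
      intro c x
      ext i
      show (∑ j, A i j * conj (c * x j)) = conj c * ∑ j, A i j * conj (x j)
      rw [Finset.mul_sum]
      refine Finset.sum_congr rfl fun j _ => ?_
      rw [map_mul]
      ring)
    (by
      intro x y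
      rw [expand, expand, Finset.sum_comm]
      refine Finset.sum_congr rfl fun i _ => Finset.sum_congr rfl fun j _ => ?_
      rw [hAsymm i j]
      ring)
  have hv_ite : ∀ i j, ⟪v i, v j⟫_ℂ = if i = j then 1 else 0 :=
    fun i j => orthonormal_iff_ite.mp hv_on i j
  -- the polynomials
  set F : Fin (n + 1) → Polynomial ℂ := fun i => ∑ k, conj (v i k) • p k with hF
  -- fischer of basic polynomials
  have hchoose : ∀ k : Fin (n + 1), (n.choose (k : ℕ) : ℂ) ≠ 0 := by
    intro k
    exact_mod_cast Nat.cast_ne_zero.mpr (Nat.choose_pos k.is_le).ne'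
  have hpc : ∀ (k : Fin (n + 1)) (t : ℕ),
      (p k).coeff t = if t = (k : ℕ) then ((Real.sqrt (n.choose k) : ℂ)) else 0 := by
    intro k t
    rw [hp]
    simp [Polynomial.coeff_C_mul, Polynomial.coeff_X_pow, eq_comm]
  have hfp : ∀ k l : Fin (n + 1), fischer n (p k) (p l) = if k = l then 1 else 0 := by
    intro k l
    unfold fischer
    by_cases h : k = l
    · subst h
      rw [if_pos rfl]
      rw [Finset.sum_eq_single (k : ℕ)]
      · rw [hpc, if_pos rfl, Complex.conj_ofReal, mul_assoc, ← Complex.ofReal_mul,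
          Real.mul_self_sqrt (by positivity)]
        rw [show ((n.choose (k : ℕ) : ℝ) : ℂ) = (n.choose (k : ℕ) : ℂ) by push_cast; ring]
        exact inv_mul_cancel₀ (hchoose k)
      · intro t _ ht
        rw [hpc, if_neg ht]
        simp
      · intro h
        exact absurd (Finset.mem_range.mpr k.isLt) h
    · rw [if_neg h]
      refine Finset.sum_eq_zero fun t _ => ?_
      rcases eq_or_ne t (k : ℕ) with rfl | ht
      · rw [hpc l, if_neg (by simpa [Fin.val_eq_val] using h)]
        simp
      · rw [hpc k, if_neg ht]
        simp
  -- fischer of the F's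
  have hfF : ∀ i j, fischer n (F i) (F j) = if i = j then 1 else 0 := by
    intro i j
    rw [hF]
    rw [fischer_sum_left]
    rw [← hv_ite i j, PiLp.inner_apply]
    refine Finset.sum_congr rfl fun k _ => ?_
    rw [fischer_smul_left, fischer_sum_right]
    rw [Finset.sum_eq_single k]
    · rw [fischer_smul_right, hfp, if_pos rfl, Complex.conj_conj, RCLike.inner_apply]
      ring
    · intro l _ hl
      rw [fischer_smul_right, hfp, if_neg (Ne.symm hl), mul_zero]
    · intro h
      exact absurd (Finset.mem_univ k) h
  -- apolarity of the F's
  set compL : Polynomial ℂ →ₗ[ℂ] Polynomial ℂ :=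
    { toFun := fun f => f.comp q
      map_add' := fun a b => Polynomial.add_comp
      map_smul' := fun c a => Polynomial.smul_comp c a q } with hcompL
  have hcomp : ∀ i, (F i).comp q = ∑ k, conj (v i k) • (p k).comp q := by
    intro i
    rw [hF]
    show compL (∑ k, conj (v i k) • p k) = _
    rw [map_sum]
    refine Finset.sum_congr rfl fun k _ => ?_
    show (conj (v i k) • p k).comp q = _
    rw [Polynomial.smul_comp]
  have hapF : ∀ i j, apol (n * d) ((F i).comp q) ((F j).comp q)
      = if i = j then ((lam j : ℂ)) else 0 := by
    intro i j
    rw [hcomp, hcomp, apol_sum_left]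
    have step : ∀ k, apol (n * d) (conj (v i k) • (p k).comp q)
        (∑ l, conj (v j l) • (p l).comp q) = conj (v i k) * ((lam j : ℂ) * v j k) := by
      intro k
      rw [apol_smul_left, apol_sum_right]
      have inner_sum : (∑ l, apol (n * d) ((p k).comp q) (conj (v j l) • (p l).comp q))
          = S (v j) k := by
        rw [hSapp]
        refine Finset.sum_congr rfl fun l _ => ?_
        rw [apol_smul_right]
        ring
      rw [inner_sum, (hv_eig j).2, PiLp.smul_apply, smul_eq_mul]
    rw [Finset.sum_congr rfl fun k _ => step k]
    have : (∑ k, conj (v i k) * ((lam j : ℂ) * v j k)) = (lam j : ℂ) * ⟪v i, v j⟫_ℂ := by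
      rw [PiLp.inner_apply, Finset.mul_sum]
      refine Finset.sum_congr rfl fun k _ => ?_
      rw [RCLike.inner_apply]
      ring
    rw [this, hv_ite]
    by_cases h : i = j
    · subst h; simp
    · simp [h]
  -- membership in degreeLE
  have hmem : ∀ i, F i ∈ Polynomial.degreeLE ℂ (n : ℕ) := by
    intro i
    rw [hF]
    refine Submodule.sum_mem _ fun k _ => Submodule.smul_mem _ _ ?_
    rw [Polynomial.mem_degreeLE, hp]
    exact le_trans (Polynomial.degree_C_mul_X_pow_le _ _)
      (by exact_mod_cast Nat.cast_le.mpr k.is_le)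
  -- linear independence
  have hLI : LinearIndependent ℂ F := by
    rw [Fintype.linearIndependent_iff]
    intro g hg j
    have h0 : fischer n (∑ i, g i • F i) (F j) = g j := by
      rw [fischer_sum_left, Finset.sum_eq_single j]
      · rw [fischer_smul_left, hfF, if_pos rfl, mul_one]
      · intro l _ hl
        rw [fischer_smul_left, hfF, if_neg hl, mul_zero]
      · intro h
        exact absurd (Finset.mem_univ j) h
    rw [hg] at h0
    rw [← h0]
    unfold fischer
    refine Finset.sum_eq_zero fun t _ => ?_
    simp
  -- span
  have hspan : Submodule.span ℂ (Set.range F) = Polynomial.degreeLE ℂ (n : ℕ) := by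
    rw [← Polynomial.degreeLT_succ_eq_degreeLE]
    have hfd : FiniteDimensional ℂ (Polynomial.degreeLT ℂ (n + 1)) :=
      Module.Finite.equiv (Polynomial.degreeLTEquiv ℂ (n + 1)).symm
    refine Submodule.eq_of_le_of_finrank_le ?_ ?_
    · rw [Submodule.span_le]
      rintro _ ⟨i, rfl⟩
      rw [SetLike.mem_coe, Polynomial.degreeLT_succ_eq_degreeLE]
      exact hmem i
    · rw [finrank_span_eq_card hLI]
      have h1 : Module.finrank ℂ (Polynomial.degreeLT ℂ (n + 1)) = n + 1 := by
        rw [(Polynomial.degreeLTEquiv ℂ (n + 1)).finrank_eq]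
        simp
      rw [h1, Fintype.card_fin]
  exact ⟨F, lam, fun i => Polynomial.mem_degreeLE.mp (hmem i), hLI, hspan,
    fun i => (hv_eig i).1, hfF, fun i j => by
      rw [hapF]
      by_cases h : i = j
      · subst h; rfl
      · rw [if_neg h, if_neg h]⟩
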